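/- Let (ζ_k) be i.i.d. real random variables with distribution H, let N ~ Poisson(C₂) with 0 < C₂ < ∞ be independent of (ζ_k), and let ζ = (ζ_1, …, ζ_N). For any m > 0 and any 1 ≤ p ≤ ∞: E|ζ_1|^m < ∞ if and only if E ||ζ||_p^m < ∞, where ||ζ||_p is the p-norm of the random-length vector (equal to 0 when N = 0). -/

import Mathlib

open MeasureTheory ProbabilityTheory
open scoped ENNReal
open scoped NNReal

/-- The `p`-norm of the random-length vector `(x 0, …, x (n-1))`:
`(∑_{k<n} |x k|^p)^(1/p)` for `p < ∞` and `max_{k<n} |x k|` for `p = ∞`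
(equal to `0` when `n = 0`). -/
noncomputable def rnorm (p : ℝ≥0∞) (n : ℕ) (x : ℕ → ℝ) : ℝ :=
  if p = ⊤ then sSup ((fun k => |x k|) '' Set.Iio n)
  else (∑ k ∈ Finset.range n, |x k| ^ p.toReal) ^ (1 / p.toReal)

lemma rnorm_top_eq (n : ℕ) (x : ℕ → ℝ) :
    rnorm ⊤ n x = ((((Finset.range n).sup fun k => ‖x k‖₊) : ℝ≥0) : ℝ) := by
  rw [rnorm, if_pos rfl]
  have himg : Set.Iio n = ((Finset.range n : Finset ℕ) : Set ℕ) := by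
    rw [Finset.coe_range]
  rcases Nat.eq_zero_or_pos n with h | h
  · subst h
    rw [himg]
    simp [Real.sSup_empty]
  · have hne : (Finset.range n).Nonempty := by
      rw [Finset.nonempty_range_iff]; exact h.ne'
    rw [himg, ← Finset.sup'_eq_csSup_image _ hne]
    rw [← Finset.sup'_eq_sup hne fun k => ‖x k‖₊]
    rw [Finset.comp_sup'_eq_sup'_comp hne (f := fun k => ‖x k‖₊) NNReal.toReal
      (by intro x y; simp [NNReal.coe_max])]
    apply Finset.sup'_congr _ rfl
    intro k _
    simp [Function.comp, Real.norm_eq_abs]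

lemma rnorm_nonneg (p : ℝ≥0∞) (n : ℕ) (x : ℕ → ℝ) : 0 ≤ rnorm p n x := by
  by_cases hp : p = ⊤
  · subst hp; rw [rnorm_top_eq]; positivity
  · rw [rnorm, if_neg hp]; positivity

lemma rnorm_le_sum {p : ℝ≥0∞} (hp : 1 ≤ p) (n : ℕ) (x : ℕ → ℝ) :
    rnorm p n x ≤ ∑ k ∈ Finset.range n, |x k| := by
  by_cases hptop : p = ⊤
  · subst hptop
    rw [rnorm_top_eq]
    rcases Nat.eq_zero_or_pos n with h | h
    · subst h; simp
    · have hne : (Finset.range n).Nonempty := by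
        rw [Finset.nonempty_range_iff]; exact h.ne'
      rw [← Finset.sup'_eq_sup hne]
      rw [Finset.comp_sup'_eq_sup'_comp hne (f := fun k => ‖x k‖₊) NNReal.toReal
        (by intro x y; simp [NNReal.coe_max])]
      apply Finset.sup'_le
      intro k hk
      simp only [Function.comp, coe_nnnorm, Real.norm_eq_abs]
      exact Finset.single_le_sum (fun i _ => abs_nonneg (x i)) hk
  · rw [rnorm, if_neg hptop]
    have hq1 : 1 ≤ p.toReal := by
      rw [← ENNReal.toReal_one]
      exact ENNReal.toReal_mono hptop hp
    have hq0 : 0 < p.toReal := lt_of_lt_of_le one_pos hq1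
    set q := p.toReal
    set S := ∑ k ∈ Finset.range n, |x k| with hS
    have hSnn : 0 ≤ S := Finset.sum_nonneg fun i _ => abs_nonneg _
    have key : ∑ k ∈ Finset.range n, |x k| ^ q ≤ S ^ q := by
      calc ∑ k ∈ Finset.range n, |x k| ^ q
          ≤ ∑ k ∈ Finset.range n, |x k| * S ^ (q - 1) := by
            apply Finset.sum_le_sum
            intro k hk
            have hxk : 0 ≤ |x k| := abs_nonneg _
            have hle : |x k| ≤ S := Finset.single_le_sum (fun i _ => abs_nonneg (x i)) hk
            calc |x k| ^ q = |x k| ^ (1 + (q - 1)) := by ring_nf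
              _ = |x k| ^ (1:ℝ) * |x k| ^ (q - 1) :=
                  Real.rpow_add' hxk (by linarith)
              _ ≤ |x k| * S ^ (q - 1) := by
                  rw [Real.rpow_one]
                  exact mul_le_mul_of_nonneg_left
                    (Real.rpow_le_rpow hxk hle (by linarith)) hxk
        _ = S * S ^ (q - 1) := by rw [← Finset.sum_mul]
        _ = S ^ q := by
            rcases eq_or_lt_of_le hSnn with h0 | h0
            · rw [← h0]
              simp [Real.zero_rpow hq0.ne', Real.zero_rpow]
            · nth_rewrite 1 [← Real.rpow_one S]
              rw [← Real.rpow_add h0]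
              ring_nf
    calc (∑ k ∈ Finset.range n, |x k| ^ q) ^ (1/q)
        ≤ (S ^ q) ^ (1/q) := by
          apply Real.rpow_le_rpow _ key (by positivity)
          exact Finset.sum_nonneg fun i _ => Real.rpow_nonneg (abs_nonneg _) _
      _ = S := by
          rw [← Real.rpow_mul hSnn]
          rw [mul_one_div, div_self hq0.ne', Real.rpow_one]

lemma abs_le_rnorm {p : ℝ≥0∞} (hp : 1 ≤ p) {n k : ℕ} (hk : k < n) (x : ℕ → ℝ) :
    |x k| ≤ rnorm p n x := by
  by_cases hptop : p = ⊤
  · subst hptop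
    rw [rnorm_top_eq]
    have : ‖x k‖₊ ≤ (Finset.range n).sup fun k => ‖x k‖₊ :=
      Finset.le_sup (f := fun k => ‖x k‖₊) (Finset.mem_range.mpr hk)
    calc |x k| = ((‖x k‖₊ : ℝ≥0) : ℝ) := by simp [Real.norm_eq_abs]
      _ ≤ _ := NNReal.coe_le_coe.mpr this
  · rw [rnorm, if_neg hptop]
    have hq1 : 1 ≤ p.toReal := by
      rw [← ENNReal.toReal_one]
      exact ENNReal.toReal_mono hptop hp
    have hq0 : 0 < p.toReal := lt_of_lt_of_le one_pos hq1
    set q := p.toReal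
    have h1 : |x k| ^ q ≤ ∑ j ∈ Finset.range n, |x j| ^ q :=
      Finset.single_le_sum (fun i _ => Real.rpow_nonneg (abs_nonneg _) _)
        (Finset.mem_range.mpr hk)
    calc |x k| = (|x k| ^ q) ^ (1/q) := by
          rw [← Real.rpow_mul (abs_nonneg _), mul_one_div, div_self hq0.ne',
            Real.rpow_one]
      _ ≤ _ := Real.rpow_le_rpow (Real.rpow_nonneg (abs_nonneg _) _) h1 (by positivity)

lemma measurable_rnorm_fixed {Ω : Type*} [MeasurableSpace Ω]
    {ζ : ℕ → Ω → ℝ} (hmeas : ∀ k, Measurable (ζ k))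
    (p : ℝ≥0∞) (n : ℕ) : Measurable fun ω => rnorm p n fun k => ζ k ω := by
  by_cases hptop : p = ⊤
  · subst hptop
    simp only [rnorm_top_eq]
    apply Measurable.comp NNReal.continuous_coe.measurable
    induction n with
    | zero => simpa using measurable_const
    | succ n ih =>
        rw [show Finset.range (n+1) = insert n (Finset.range n) from Finset.range_add_one]
        simp only [Finset.sup_insert]
        exact ((hmeas n).nnnorm).sup ih
  · simp only [rnorm, if_neg hptop]
    apply Measurable.comp (Real.continuous_rpow_const (one_div_nonneg.mpr ENNReal.toReal_nonneg)).measurable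
    apply Finset.measurable_sum
    intro k _
    exact Measurable.comp (Real.continuous_rpow_const ENNReal.toReal_nonneg).measurable
      (hmeas k).abs

lemma measurable_rnorm_N {Ω : Type*} [MeasurableSpace Ω]
    {ζ : ℕ → Ω → ℝ} {N : Ω → ℕ} (hmeas : ∀ k, Measurable (ζ k))
    (hmN : Measurable N) (p : ℝ≥0∞) :
    Measurable fun ω => rnorm p (N ω) fun k => ζ k ω := by
  have h : (fun ω => rnorm p (N ω) fun k => ζ k ω) =
      (fun q : Ω × ℕ => rnorm p q.2 fun k => ζ k q.1) ∘ fun ω => (ω, N ω) := rfl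
  rw [h]
  exact (measurable_from_prod_countable_left fun n =>
    measurable_rnorm_fixed hmeas p n).comp (measurable_id.prodMk hmN)

lemma rnorm_rpow_le {p : ℝ≥0∞} (hp : 1 ≤ p) {m : ℝ} (hm : 0 < m) (n : ℕ) (x : ℕ → ℝ) :
    rnorm p n x ^ m ≤ (n : ℝ) ^ m * ∑ k ∈ Finset.range n, |x k| ^ m := by
  have hle := rnorm_le_sum hp n x
  have hnn := rnorm_nonneg p n x
  rcases Nat.eq_zero_or_pos n with h | h
  · subst h
    simp only [Finset.range_zero, Finset.sum_empty] at hle ⊢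
    have : rnorm p 0 x = 0 := le_antisymm hle hnn
    rw [this, Real.zero_rpow hm.ne']
    simp
  · have hne : (Finset.range n).Nonempty := by
      rw [Finset.nonempty_range_iff]; exact h.ne'
    set B := (Finset.range n).sup' hne fun k => |x k| with hB
    obtain ⟨j, hj, hjB⟩ := Finset.exists_mem_eq_sup' hne fun k => |x k|
    rw [← hB] at hjB
    have hBnn : 0 ≤ B := hjB.symm ▸ abs_nonneg (x j)
    have h1 : ∑ k ∈ Finset.range n, |x k| ≤ (n : ℝ) * B := by
      have := Finset.sum_le_card_nsmul (Finset.range n) (fun k => |x k|) B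
        (fun k hk => Finset.le_sup' (f := fun k => |x k|) hk)
      simpa [nsmul_eq_mul] using this
    calc rnorm p n x ^ m ≤ ((n : ℝ) * B) ^ m :=
          Real.rpow_le_rpow hnn (le_trans hle h1) hm.le
      _ = (n : ℝ) ^ m * B ^ m := Real.mul_rpow (by positivity) hBnn
      _ ≤ (n : ℝ) ^ m * ∑ k ∈ Finset.range n, |x k| ^ m := by
          apply mul_le_mul_of_nonneg_left _ (by positivity)
          rw [hjB]
          exact Finset.single_le_sum (fun i _ => Real.rpow_nonneg (abs_nonneg _) _) hj

set_option maxHeartbeats 1000000 in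
lemma summable_poisson_moment (C₂ : ℝ) (hC : 0 < C₂) (m : ℝ) (hm : 0 < m) :
    Summable fun n : ℕ => (n : ℝ) ^ m * n * (Real.exp (-C₂) * C₂ ^ n / n.factorial) := by
  set M := ⌈m⌉₊ + 1 with hM
  have hb : ∀ n : ℕ, (n : ℝ) ^ m * n ≤ (n : ℝ) ^ M := by
    intro n
    rcases Nat.eq_zero_or_pos n with h | h
    · subst h; simp [Real.zero_rpow hm.ne']
    · have h1 : (1 : ℝ) ≤ n := by exact_mod_cast h
      have : (n : ℝ) ^ m ≤ (n : ℝ) ^ (M - 1 : ℕ) := by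
        rw [← Real.rpow_natCast _ (M - 1)]
        apply Real.rpow_le_rpow_of_exponent_le h1
        have : m ≤ ⌈m⌉₊ := Nat.le_ceil m
        simp [hM]
        exact_mod_cast this
      calc (n : ℝ) ^ m * n ≤ (n : ℝ) ^ (M - 1 : ℕ) * n :=
            mul_le_mul_of_nonneg_right this (Nat.cast_nonneg n)
        _ = (n : ℝ) ^ M := by
            simp [hM, pow_succ, mul_comm]
  have hsum2 : Summable fun n : ℕ => (n : ℝ) ^ M * (1/2 : ℝ) ^ n := by
    have := summable_pow_mul_geometric_of_norm_lt_one (R := ℝ) M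
      (r := (1/2 : ℝ)) (by norm_num [Real.norm_eq_abs, abs_of_pos])
    simpa using this
  set c := ∑' n : ℕ, (n : ℝ) ^ M * (1/2 : ℝ) ^ n with hc
  have hcb : ∀ n : ℕ, (n : ℝ) ^ M * (1/2 : ℝ) ^ n ≤ c :=
    fun n => Summable.le_tsum hsum2 n (fun j _ => by positivity)
  refine Summable.of_nonneg_of_le
    (f := fun n : ℕ => (c * Real.exp (-C₂)) * ((2 * C₂) ^ n / n.factorial))
    (fun n => mul_nonneg (mul_nonneg (Real.rpow_nonneg (Nat.cast_nonneg n) m)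
      (Nat.cast_nonneg n)) (by positivity)) (fun n => ?_)
    ((Real.summable_pow_div_factorial (2 * C₂)).mul_left _)
  · have key : (n : ℝ) ^ M * C₂ ^ n = ((n : ℝ) ^ M * (1/2) ^ n) * (2 * C₂) ^ n := by
      rw [mul_assoc, ← mul_pow]
      ring_nf
    calc (n : ℝ) ^ m * n * (Real.exp (-C₂) * C₂ ^ n / n.factorial)
        ≤ (n : ℝ) ^ M * (Real.exp (-C₂) * C₂ ^ n / n.factorial) := by
          apply mul_le_mul_of_nonneg_right (hb n) (by positivity)
      _ = ((n : ℝ) ^ M * C₂ ^ n) * (Real.exp (-C₂) / n.factorial) := by ring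
      _ = ((n : ℝ) ^ M * (1/2) ^ n) * ((2 * C₂) ^ n) * (Real.exp (-C₂) / n.factorial) := by
          rw [key]
      _ ≤ c * ((2 * C₂) ^ n) * (Real.exp (-C₂) / n.factorial) := by
          apply mul_le_mul_of_nonneg_right (mul_le_mul_of_nonneg_right (hcb n) (by positivity))
            (by positivity)
      _ = (c * Real.exp (-C₂)) * ((2 * C₂) ^ n / n.factorial) := by ring

/-- For iid `(ζ k) ~ H` and an independent `N ~ Poisson(C₂)` with `0 < C₂ < ∞`,
and any `m > 0`, `1 ≤ p ≤ ∞`: `E|ζ₁|^m < ∞` iff `E ‖(ζ₁,…,ζ_N)‖_p^m < ∞`. -/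
theorem stmt11 {Ω : Type*} [MeasurableSpace Ω] (μ : Measure Ω) [IsProbabilityMeasure μ]
    (ζ : ℕ → Ω → ℝ) (N : Ω → ℕ) (C₂ : ℝ) (hC : 0 < C₂)
    (m : ℝ) (hm : 0 < m) (p : ℝ≥0∞) (hp : 1 ≤ p)
    (hmeas : ∀ k, Measurable (ζ k)) (hmN : Measurable N)
    (hid : ∀ k, Measure.map (ζ k) μ = Measure.map (ζ 0) μ)
    (hpois : ∀ k, μ {ω | N ω = k} =
      ENNReal.ofReal (Real.exp (-C₂) * C₂ ^ k / k.factorial))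
    (hindep : iIndepFun
      (fun i : Option ℕ => Option.elim i (fun ω => (N ω : ℝ)) ζ) μ) :
    Integrable (fun ω => |ζ 0 ω| ^ m) μ ↔
      Integrable (fun ω => (rnorm p (N ω) (fun k => ζ k ω)) ^ m) μ := by
  -- basic measurability
  have hψ : Measurable fun x : ℝ => ENNReal.ofReal (|x| ^ m) :=
    ENNReal.measurable_ofReal.comp
      ((Real.continuous_rpow_const hm.le).measurable.comp measurable_abs)
  have hRm : Measurable fun ω => rnorm p (N ω) fun k => ζ k ω :=
    measurable_rnorm_N hmeas hmN p
  have hRm' : Measurable fun ω => (rnorm p (N ω) fun k => ζ k ω) ^ m :=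
    (Real.continuous_rpow_const hm.le).measurable.comp hRm
  have hNmeasR : Measurable fun ω => (N ω : ℝ) :=
    (measurable_from_top (f := (Nat.cast : ℕ → ℝ))).comp hmN
  set A := ∫⁻ ω, ENNReal.ofReal (|ζ 0 ω| ^ m) ∂μ with hA
  set R := ∫⁻ ω, ENNReal.ofReal ((rnorm p (N ω) fun k => ζ k ω) ^ m) ∂μ with hRR
  -- identical distribution
  have hAk : ∀ k, ∫⁻ ω, ENNReal.ofReal (|ζ k ω| ^ m) ∂μ = A := by
    intro k
    calc ∫⁻ ω, ENNReal.ofReal (|ζ k ω| ^ m) ∂μ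
        = ∫⁻ x, ENNReal.ofReal (|x| ^ m) ∂(Measure.map (ζ k) μ) :=
          (lintegral_map hψ (hmeas k)).symm
      _ = ∫⁻ x, ENNReal.ofReal (|x| ^ m) ∂(Measure.map (ζ 0) μ) := by rw [hid k]
      _ = A := lintegral_map hψ (hmeas 0)
  -- independence product formula
  have hprod : ∀ (s : Set ℝ), MeasurableSet s → ∀ k : ℕ,
      ∫⁻ ω, (s.indicator (fun _ => (1:ℝ≥0∞)) ((N ω : ℝ))) *
        ENNReal.ofReal (|ζ k ω| ^ m) ∂μ
        = μ ((fun ω => (N ω : ℝ)) ⁻¹' s) * A := by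
    intro s hs k
    have hφ : Measurable fun x : ℝ => s.indicator (fun _ => (1:ℝ≥0∞)) x :=
      measurable_const.indicator hs
    have hindkk : IndepFun (fun ω => (N ω : ℝ)) (ζ k) μ :=
      hindep.indepFun (show (none : Option ℕ) ≠ some k by simp)
    have hind : IndepFun (fun ω => s.indicator (fun _ => (1:ℝ≥0∞)) ((N ω : ℝ)))
        (fun ω => ENNReal.ofReal (|ζ k ω| ^ m)) μ := hindkk.comp hφ hψ
    have heq := lintegral_mul_eq_lintegral_mul_lintegral_of_indepFun
      (f := fun ω => s.indicator (fun _ => (1:ℝ≥0∞)) ((N ω : ℝ)))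
      (g := fun ω => ENNReal.ofReal (|ζ k ω| ^ m))
      (hφ.comp hNmeasR) (hψ.comp (hmeas k)) hind
    have hf : (fun ω => s.indicator (fun _ => (1:ℝ≥0∞)) ((N ω : ℝ)))
        = Set.indicator ((fun ω => (N ω : ℝ)) ⁻¹' s) (fun _ => (1:ℝ≥0∞)) := by
      funext ω
      by_cases h : (N ω : ℝ) ∈ s <;> simp [Set.indicator, h]
    calc ∫⁻ ω, (s.indicator (fun _ => (1:ℝ≥0∞)) ((N ω : ℝ))) *
          ENNReal.ofReal (|ζ k ω| ^ m) ∂μ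
        = (∫⁻ ω, s.indicator (fun _ => (1:ℝ≥0∞)) ((N ω : ℝ)) ∂μ) *
          ∫⁻ ω, ENNReal.ofReal (|ζ k ω| ^ m) ∂μ := heq
      _ = μ ((fun ω => (N ω : ℝ)) ⁻¹' s) * A := by
          rw [hAk k]
          congr 1
          rw [show (∫⁻ ω, s.indicator (fun _ => (1:ℝ≥0∞)) ((N ω : ℝ)) ∂μ)
              = ∫⁻ ω, ((fun ω => (N ω : ℝ)) ⁻¹' s).indicator (fun _ => (1:ℝ≥0∞)) ω ∂μ from by
            rw [hf]]
          rw [lintegral_indicator_const (hNmeasR hs) 1, one_mul]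
  have hsets : ∀ n : ℕ, MeasurableSet {ω | N ω = n} :=
    fun n => hmN (measurableSet_singleton n)
  have hζk : ∀ k : ℕ, Measurable fun ω => ENNReal.ofReal (|ζ k ω| ^ m) :=
    fun k => hψ.comp (hmeas k)
  have hpre : ∀ n : ℕ, (fun ω => (N ω : ℝ)) ⁻¹' {(n:ℝ)} = {ω | N ω = n} := by
    intro n; ext ω; simp [Nat.cast_inj]
  have hpre1 : (fun ω => (N ω : ℝ)) ⁻¹' (Set.Ici 1) = {ω | 1 ≤ N ω} := by
    ext ω; simp [Nat.one_le_cast]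
  -- reduce Integrable to lintegral finiteness
  have hiff1 : Integrable (fun ω => |ζ 0 ω| ^ m) μ ↔ A < ⊤ := by
    rw [hA]
    constructor
    · intro h
      have h2 := h.2
      rwa [hasFiniteIntegral_iff_ofReal
        (Filter.Eventually.of_forall fun ω => by positivity)] at h2
    · intro h
      refine ⟨((Real.continuous_rpow_const hm.le).measurable.comp
        (hmeas 0).abs).aestronglyMeasurable, ?_⟩
      rwa [hasFiniteIntegral_iff_ofReal
        (Filter.Eventually.of_forall fun ω => by positivity)]
  have hiff2 : Integrable (fun ω => (rnorm p (N ω) fun k => ζ k ω) ^ m) μ ↔ R < ⊤ := by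
    rw [hRR]
    constructor
    · intro h
      have h2 := h.2
      rwa [hasFiniteIntegral_iff_ofReal (Filter.Eventually.of_forall fun ω =>
        Real.rpow_nonneg (rnorm_nonneg _ _ _) m)] at h2
    · intro h
      exact ⟨hRm'.aestronglyMeasurable, by
        rwa [hasFiniteIntegral_iff_ofReal (Filter.Eventually.of_forall fun ω =>
          Real.rpow_nonneg (rnorm_nonneg _ _ _) m)]⟩
  rw [hiff1, hiff2]
  constructor
  · -- forward: A < ⊤ → R < ⊤
    intro hAfin
    have hcover : (Set.univ : Set Ω) = ⋃ n, {ω | N ω = n} := by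
      ext ω; simp
    have hdisj : Pairwise (Function.onFun Disjoint fun n => {ω | N ω = n}) := by
      intro i j hij
      simp only [Function.onFun]
      rw [Set.disjoint_left]
      rintro ω h1 h2
      exact hij ((h1 : N ω = i).symm.trans h2)
    have hpartition : R = ∑' n, ∫⁻ ω in {ω | N ω = n},
        ENNReal.ofReal ((rnorm p (N ω) fun k => ζ k ω) ^ m) ∂μ := by
      rw [hRR, ← setLIntegral_univ, hcover, lintegral_iUnion hsets hdisj]
    have hbound : ∀ n : ℕ, ∫⁻ ω in {ω | N ω = n},
        ENNReal.ofReal ((rnorm p (N ω) fun k => ζ k ω) ^ m) ∂μ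
        ≤ ENNReal.ofReal ((n:ℝ) ^ m * n * (Real.exp (-C₂) * C₂ ^ n / n.factorial)) * A := by
      intro n
      have hterm : ∀ k : ℕ, ∫⁻ ω in {ω | N ω = n}, ENNReal.ofReal (|ζ k ω| ^ m) ∂μ
          = ENNReal.ofReal (Real.exp (-C₂) * C₂ ^ n / n.factorial) * A := by
        intro k
        have hip : (fun ω => Set.indicator {ω | N ω = n}
            (fun ω => ENNReal.ofReal (|ζ k ω| ^ m)) ω)
            = fun ω => (Set.indicator {(n:ℝ)} (fun _ => (1:ℝ≥0∞)) ((N ω : ℝ))) *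
              ENNReal.ofReal (|ζ k ω| ^ m) := by
          funext ω
          by_cases h : N ω = n
          · simp [Set.indicator, h]
          · have h' : ¬((N ω : ℝ) = (n : ℝ)) := by exact_mod_cast h
            simp [Set.indicator, h, h']
        calc ∫⁻ ω in {ω | N ω = n}, ENNReal.ofReal (|ζ k ω| ^ m) ∂μ
            = ∫⁻ ω, Set.indicator {ω | N ω = n}
                (fun ω => ENNReal.ofReal (|ζ k ω| ^ m)) ω ∂μ :=
              (lintegral_indicator (hsets n) _).symm
          _ = ∫⁻ ω, (Set.indicator {(n:ℝ)} (fun _ => (1:ℝ≥0∞)) ((N ω : ℝ))) *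
                ENNReal.ofReal (|ζ k ω| ^ m) ∂μ := by rw [hip]
          _ = μ ((fun ω => (N ω : ℝ)) ⁻¹' {(n:ℝ)}) * A :=
              hprod {(n:ℝ)} (measurableSet_singleton _) k
          _ = ENNReal.ofReal (Real.exp (-C₂) * C₂ ^ n / n.factorial) * A := by
              rw [hpre n, hpois n]
      calc ∫⁻ ω in {ω | N ω = n},
            ENNReal.ofReal ((rnorm p (N ω) fun k => ζ k ω) ^ m) ∂μ
          = ∫⁻ ω in {ω | N ω = n},
            ENNReal.ofReal ((rnorm p n fun k => ζ k ω) ^ m) ∂μ := by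
            apply setLIntegral_congr_fun (hsets n)
            exact fun ω (h : N ω = n) => by simp only [h]
        _ ≤ ∫⁻ ω in {ω | N ω = n},
            ENNReal.ofReal ((n:ℝ) ^ m) * ∑ k ∈ Finset.range n,
              ENNReal.ofReal (|ζ k ω| ^ m) ∂μ := by
            apply lintegral_mono
            intro ω
            dsimp only
            rw [← ENNReal.ofReal_sum_of_nonneg
              (fun i _ => Real.rpow_nonneg (abs_nonneg _) _), ← ENNReal.ofReal_mul
              (by positivity)]
            exact ENNReal.ofReal_le_ofReal (rnorm_rpow_le hp hm n _)
        _ = ENNReal.ofReal ((n:ℝ) ^ m) * ∑ k ∈ Finset.range n,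
              ∫⁻ ω in {ω | N ω = n}, ENNReal.ofReal (|ζ k ω| ^ m) ∂μ := by
            rw [lintegral_const_mul _ (Finset.measurable_sum _ fun k _ => hζk k)]
            congr 1
            exact lintegral_finset_sum _ fun k _ => hζk k
        _ = ENNReal.ofReal ((n:ℝ) ^ m) * ((n : ℝ≥0∞) *
              (ENNReal.ofReal (Real.exp (-C₂) * C₂ ^ n / n.factorial) * A)) := by
            rw [Finset.sum_congr rfl fun k _ => hterm k]
            simp [Finset.sum_const, nsmul_eq_mul]
        _ = ENNReal.ofReal ((n:ℝ) ^ m * n * (Real.exp (-C₂) * C₂ ^ n / n.factorial)) * A := by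
            rw [ENNReal.ofReal_mul (by positivity), ENNReal.ofReal_mul (by positivity),
              ENNReal.ofReal_natCast]
            ring
    have hsummable := summable_poisson_moment C₂ hC m hm
    calc R ≤ ∑' n : ℕ, ENNReal.ofReal ((n:ℝ) ^ m * n *
            (Real.exp (-C₂) * C₂ ^ n / n.factorial)) * A := by
          rw [hpartition]; exact ENNReal.tsum_le_tsum hbound
      _ = (∑' n : ℕ, ENNReal.ofReal ((n:ℝ) ^ m * n *
            (Real.exp (-C₂) * C₂ ^ n / n.factorial))) * A := ENNReal.tsum_mul_right
      _ < ⊤ := by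
          apply ENNReal.mul_lt_top _ hAfin
          rw [← ENNReal.ofReal_tsum_of_nonneg (fun n => mul_nonneg (mul_nonneg
            (Real.rpow_nonneg (Nat.cast_nonneg n) m) (Nat.cast_nonneg n))
            (by positivity)) hsummable]
          exact ENNReal.ofReal_lt_top
  · -- backward: R < ⊤ → A < ⊤
    intro hRfin
    have hkey : μ {ω | 1 ≤ N ω} * A ≤ R := by
      rw [← hpre1, ← hprod (Set.Ici 1) measurableSet_Ici 0, hRR]
      apply lintegral_mono
      intro ω
      by_cases h : (1:ℝ) ≤ (N ω : ℝ)
      · have hN1 : 1 ≤ N ω := by exact_mod_cast h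
        have := abs_le_rnorm hp (show 0 < N ω from hN1) (fun k => ζ k ω)
        simp only [Set.indicator_of_mem (Set.mem_Ici.mpr h), one_mul]
        exact ENNReal.ofReal_le_ofReal
          (Real.rpow_le_rpow (abs_nonneg _) this hm.le)
      · simp [Set.indicator_of_notMem (fun hmem => h (Set.mem_Ici.mp hmem))]
    have hμpos : μ {ω | 1 ≤ N ω} ≠ 0 := by
      have hcompl : {ω | 1 ≤ N ω} = {ω | N ω = 0}ᶜ := by
        ext ω; simp [Nat.one_le_iff_ne_zero]
      have h0 : μ {ω | N ω = 0} = ENNReal.ofReal (Real.exp (-C₂)) := by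
        simpa using hpois 0
      rw [hcompl, prob_compl_eq_one_sub (hsets 0), h0]
      have hlt : ENNReal.ofReal (Real.exp (-C₂)) < 1 := by
        rw [show (1:ℝ≥0∞) = ENNReal.ofReal 1 from (ENNReal.ofReal_one).symm]
        exact ENNReal.ofReal_lt_ofReal_iff_of_nonneg (Real.exp_pos _).le |>.mpr
          (Real.exp_lt_one_iff.mpr (by linarith))
      exact (tsub_pos_of_lt hlt).ne'
    by_contra hcon
    have hAtop : A = ⊤ := by
      rwa [lt_top_iff_ne_top, not_not] at hcon
    rw [hAtop, ENNReal.mul_top hμpos] at hkey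
    exact (lt_irrefl ⊤ (lt_of_le_of_lt hkey hRfin)).elim
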